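/- arXiv:1806.10133 — 2 statements merged into one kernel-verified Lean document; each statement's English description precedes it below -/
import Mathlib

section
/- Let G be a finite simple graph with n vertices and m edges, let ℓ(G) be its line graph, and let Q(G) = D(G) + A(G) be its signless Laplacian matrix. Then in ℝ[X] one has the polynomial identity (X+2)^n · Φ_{A(ℓ(G))}(X) = (X+2)^m · Φ_{Q(G)}(X+2), where Φ_M denotes the characteristic polynomial of the matrix M and Φ_{Q(G)}(X+2) is the composition of Φ_{Q(G)} with X+2. -/
open Matrix Polynomial BigOperators Kronecker

namespace NLS

variable {V : Type*}

/-- Adjacency matrix over `ℝ` (classical decidability). -/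
noncomputable def adjMat (G : SimpleGraph V) : Matrix V V ℝ :=
  letI := Classical.decRel G.Adj
  G.adjMatrix ℝ

/-- Degree of a vertex (classical decidability). -/
noncomputable def deg [Fintype V] (G : SimpleGraph V) (v : V) : ℕ :=
  letI := Classical.decRel G.Adj
  G.degree v

/-- The normalized Laplacian `I - D^{-1/2} A D^{-1/2}`. -/
noncomputable def normLap [Fintype V] (G : SimpleGraph V) : Matrix V V ℝ :=
  letI := Classical.decEq V
  1 - (Matrix.diagonal fun v => (Real.sqrt (deg G v))⁻¹) * adjMat G *
      (Matrix.diagonal fun v => (Real.sqrt (deg G v))⁻¹)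

/-- `G` is `r`-regular. -/
def IsReg [Fintype V] (G : SimpleGraph V) (r : ℕ) : Prop := ∀ v, deg G v = r

/-- Vertex-edge incidence matrix over `ℝ`. -/
def incMat [DecidableEq V] (G : SimpleGraph V) : Matrix V G.edgeSet ℝ :=
  Matrix.of fun v e => if v ∈ (e : Sym2 V) then 1 else 0

/-- The number of spanning trees of `G`. -/
noncomputable def numSpanningTrees [Fintype V] (G : SimpleGraph V) : ℕ :=
  Nat.card {H : SimpleGraph V // H ≤ G ∧ H.IsTree}

section Corona

variable {V1 V2 V3 : Type*}

/-- Adjacency for the subdivision vertex-edge neighbourhood **vertex**-corona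
`G1^S ⋈ (G2^V ∪ G3^E)`. Vertices: original `V1`, inserted `G1.edgeSet`,
copies of `G2` indexed by `V1`, copies of `G3` indexed by `G1.edgeSet`. -/
def svevAdj (G1 : SimpleGraph V1) (G2 : SimpleGraph V2) (G3 : SimpleGraph V3) :
    (V1 ⊕ (G1.edgeSet ⊕ ((V1 × V2) ⊕ (G1.edgeSet × V3)))) →
    (V1 ⊕ (G1.edgeSet ⊕ ((V1 × V2) ⊕ (G1.edgeSet × V3)))) → Prop
  | .inl v, .inr (.inl e) => v ∈ (e : Sym2 V1)
  | .inr (.inl e), .inl v => v ∈ (e : Sym2 V1)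
  | .inr (.inl e), .inr (.inr (.inl p)) => p.1 ∈ (e : Sym2 V1)
  | .inr (.inr (.inl p)), .inr (.inl e) => p.1 ∈ (e : Sym2 V1)
  | .inr (.inl e), .inr (.inr (.inr q)) => q.1 = e
  | .inr (.inr (.inr q)), .inr (.inl e) => q.1 = e
  | .inr (.inr (.inl p)), .inr (.inr (.inl p')) => p.1 = p'.1 ∧ G2.Adj p.2 p'.2
  | .inr (.inr (.inr q)), .inr (.inr (.inr q')) => q.1 = q'.1 ∧ G3.Adj q.2 q'.2
  | _, _ => False

/-- The subdivision vertex-edge neighbourhood vertex-corona `G1^S ⋈ (G2^V ∪ G3^E)`. -/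
def svev (G1 : SimpleGraph V1) (G2 : SimpleGraph V2) (G3 : SimpleGraph V3) :
    SimpleGraph (V1 ⊕ (G1.edgeSet ⊕ ((V1 × V2) ⊕ (G1.edgeSet × V3)))) where
  Adj := svevAdj G1 G2 G3
  symm := by
    constructor
    rintro (v|e|p|q) (v'|e'|p'|q') h <;>
      first
        | exact h
        | exact ⟨h.1.symm, h.2.symm⟩
        | exact h.elim
  loopless := by
    constructor
    rintro (v|e|p|q) h
    · exact h
    · exact h
    · exact G2.loopless.irrefl _ h.2
    · exact G3.loopless.irrefl _ h.2

/-- Adjacency for the subdivision vertex-edge neighbourhood **edge**-corona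
`G1^S ◊ (G2^V ∪ G3^E)`. Vertices: original `V1`, inserted `G1.edgeSet`,
copies of `G2` indexed by `G1.edgeSet`, copies of `G3` indexed by `V1`. -/
def sveeAdj (G1 : SimpleGraph V1) (G2 : SimpleGraph V2) (G3 : SimpleGraph V3) :
    (V1 ⊕ (G1.edgeSet ⊕ ((G1.edgeSet × V2) ⊕ (V1 × V3)))) →
    (V1 ⊕ (G1.edgeSet ⊕ ((G1.edgeSet × V2) ⊕ (V1 × V3)))) → Prop
  | .inl v, .inr (.inl e) => v ∈ (e : Sym2 V1)
  | .inr (.inl e), .inl v => v ∈ (e : Sym2 V1)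
  | .inl v, .inr (.inr (.inl p)) => v ∈ (p.1 : Sym2 V1)
  | .inr (.inr (.inl p)), .inl v => v ∈ (p.1 : Sym2 V1)
  | .inl v, .inr (.inr (.inr q)) => q.1 = v
  | .inr (.inr (.inr q)), .inl v => q.1 = v
  | .inr (.inr (.inl p)), .inr (.inr (.inl p')) => p.1 = p'.1 ∧ G2.Adj p.2 p'.2
  | .inr (.inr (.inr q)), .inr (.inr (.inr q')) => q.1 = q'.1 ∧ G3.Adj q.2 q'.2
  | _, _ => False

/-- The subdivision vertex-edge neighbourhood edge-corona `G1^S ◊ (G2^V ∪ G3^E)`. -/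
def svee (G1 : SimpleGraph V1) (G2 : SimpleGraph V2) (G3 : SimpleGraph V3) :
    SimpleGraph (V1 ⊕ (G1.edgeSet ⊕ ((G1.edgeSet × V2) ⊕ (V1 × V3)))) where
  Adj := sveeAdj G1 G2 G3
  symm := by
    constructor
    rintro (v|e|p|q) (v'|e'|p'|q') h <;>
      first
        | exact h
        | exact ⟨h.1.symm, h.2.symm⟩
        | exact h.elim
  loopless := by
    constructor
    rintro (v|e|p|q) h
    · exact h
    · exact h
    · exact G2.loopless.irrefl _ h.2
    · exact G3.loopless.irrefl _ h.2

end Corona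


lemma adjMat_apply (G : SimpleGraph V) (u v : V) [Decidable (G.Adj u v)] :
    adjMat G u v = if G.Adj u v then 1 else 0 := by
  by_cases h : G.Adj u v <;> simp [adjMat, h]

lemma deg_eq [Fintype V] (G : SimpleGraph V) (v : V) [inst : Fintype (G.neighborSet v)] :
    deg G v = G.degree v := by
  unfold deg
  congr!

lemma incMat_eq_incMatrix [Fintype V] [DecidableEq V] (G : SimpleGraph V) [DecidableRel G.Adj] (u : V)
    (e : G.edgeSet) : incMat G u e = G.incMatrix ℝ u ↑e := by
  by_cases h : u ∈ (e : Sym2 V)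
  · rw [G.incMatrix_of_mem_incidenceSet ⟨e.2, h⟩]
    simp [incMat, h]
  · rw [G.incMatrix_of_notMem_incidenceSet (fun hc => h hc.2)]
    simp [incMat, h]

/-- B Bᵀ = Q. -/
lemma incMat_mul_transpose [Fintype V] [DecidableEq V] (G : SimpleGraph V)
    [Fintype G.edgeSet] :
    incMat G * (incMat G)ᵀ = Matrix.diagonal (fun v => (deg G v : ℝ)) + adjMat G := by
  classical
  ext u v
  have key : (incMat G * (incMat G)ᵀ) u v
      = (G.incMatrix ℝ * (G.incMatrix ℝ)ᵀ) u v := by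
    rw [Matrix.mul_apply, Matrix.mul_apply]
    have h1 : ∀ e : G.edgeSet, incMat G u e * (incMat G)ᵀ e v
        = G.incMatrix ℝ u ↑e * (G.incMatrix ℝ)ᵀ (↑e) v := by
      intro e
      rw [Matrix.transpose_apply, Matrix.transpose_apply, incMat_eq_incMatrix,
        incMat_eq_incMatrix]
    rw [Finset.sum_congr rfl (fun e _ => h1 e)]
    rw [← Finset.sum_subtype G.edgeFinset (fun x => SimpleGraph.mem_edgeFinset)
      (fun s => G.incMatrix ℝ u s * (G.incMatrix ℝ)ᵀ s v)]
    refine Finset.sum_subset (Finset.subset_univ _) ?_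
    intro s _ hs
    rw [SimpleGraph.mem_edgeFinset] at hs
    rw [Matrix.transpose_apply,
      G.incMatrix_of_notMem_incidenceSet (fun hc => hs hc.1), zero_mul]
  rw [key, SimpleGraph.incMatrix_mul_transpose]
  by_cases h : u = v
  · subst h
    simp [Matrix.diagonal_apply_eq, adjMat_apply, G.loopless.irrefl u, deg_eq]
  · simp [Matrix.diagonal_apply_ne _ h, h, adjMat_apply]

/-- Bᵀ B = A(ℓG) + 2. -/
lemma transpose_mul_incMat [Fintype V] [DecidableEq V] (G : SimpleGraph V)
    [Fintype G.edgeSet] :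
    (incMat G)ᵀ * incMat G = adjMat G.lineGraph + (2 : ℝ) • 1 := by
  classical
  ext e f
  rw [Matrix.mul_apply]
  by_cases hef : e = f
  · subst hef
    have h1 : ∀ v : V, (incMat G)ᵀ e v * incMat G v e
        = (G.incMatrix ℝ)ᵀ (↑e) v * G.incMatrix ℝ v ↑e := by
      intro v
      rw [Matrix.transpose_apply, Matrix.transpose_apply, incMat_eq_incMatrix]
    rw [Finset.sum_congr rfl (fun v _ => h1 v)]
    have := G.incMatrix_transpose_mul_diag (R := ℝ) (e := (e : Sym2 V))
    rw [Matrix.mul_apply] at this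
    rw [this, if_pos e.2]
    simp [adjMat_apply, Matrix.one_apply]
  · have hsum : (∑ v, (incMat G)ᵀ e v * incMat G v f)
        = ((Finset.univ.filter (fun v => v ∈ (e : Sym2 V) ∧ v ∈ (f : Sym2 V))).card : ℝ) := by
      simp only [Matrix.transpose_apply, incMat, Matrix.of_apply, ite_zero_mul_ite_zero, one_mul]
      rw [Finset.sum_boole]
    rw [hsum]
    by_cases hadj : (G.lineGraph).Adj e f
    · obtain ⟨hne, w, hw1, hw2⟩ := SimpleGraph.lineGraph_adj_iff_exists.mp hadj
      have hfilter : (Finset.univ.filter (fun v => v ∈ (e : Sym2 V) ∧ v ∈ (f : Sym2 V)))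
          = {w} := by
        ext v
        simp only [Finset.mem_filter, Finset.mem_univ, true_and, Finset.mem_singleton]
        constructor
        · rintro ⟨hv1, hv2⟩
          by_contra hvw
          have he : (e : Sym2 V) = s(v, w) := (Sym2.mem_and_mem_iff hvw).mp ⟨hv1, hw1⟩
          have hf : (f : Sym2 V) = s(v, w) := (Sym2.mem_and_mem_iff hvw).mp ⟨hv2, hw2⟩
          exact hne (Subtype.ext (he.trans hf.symm))
        · rintro rfl; exact ⟨hw1, hw2⟩
      rw [hfilter]
      simp [adjMat_apply, hadj, Matrix.one_apply, hef]
    · have hnone : ∀ v : V, ¬(v ∈ (e : Sym2 V) ∧ v ∈ (f : Sym2 V)) := by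
        intro v hv
        exact hadj (SimpleGraph.lineGraph_adj_iff_exists.mpr ⟨hef, v, hv.1, hv.2⟩)
      have hfilter : (Finset.univ.filter (fun v => v ∈ (e : Sym2 V) ∧ v ∈ (f : Sym2 V)))
          = ∅ := by
        ext v; simp [hnone v]
      rw [hfilter]
      simp [adjMat_apply, hadj, Matrix.one_apply, hef]

lemma key_field {F : Type*} [Field F] {k l : Type*} [Fintype k] [Fintype l]
    [DecidableEq k] [DecidableEq l] (B : Matrix k l F) (t : F) (ht : t ≠ 0) :
    t ^ Fintype.card k * (t • (1 : Matrix l l F) - Bᵀ * B).det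
      = t ^ Fintype.card l * (t • (1 : Matrix k k F) - B * Bᵀ).det := by
  have h1 : t • (1 : Matrix l l F) - Bᵀ * B
      = t • ((1 : Matrix l l F) + ((-t⁻¹) • Bᵀ) * B) := by
    rw [Matrix.smul_mul, smul_add, smul_smul, mul_neg, mul_inv_cancel₀ ht, neg_smul, one_smul,
      sub_eq_add_neg]
  have h2 : t • (1 : Matrix k k F) - B * Bᵀ
      = t • ((1 : Matrix k k F) + B * ((-t⁻¹) • Bᵀ)) := by
    rw [Matrix.mul_smul, smul_add, smul_smul, mul_neg, mul_inv_cancel₀ ht, neg_smul, one_smul,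
      sub_eq_add_neg]
  rw [h1, h2, Matrix.det_smul, Matrix.det_smul, Matrix.det_one_add_mul_comm]
  ring

lemma charpoly_hom {S : Type*} [CommRing S] {k : Type*} [Fintype k] [DecidableEq k]
    (M : Matrix k k ℝ) (ψ : ℝ[X] →+* S) :
    ψ M.charpoly = ((ψ X) • (1 : Matrix k k S) - M.map ⇑(ψ.comp (C : ℝ →+* ℝ[X]))).det := by
  rw [Matrix.charpoly, RingHom.map_det]
  congr 1
  ext i j
  by_cases h : i = j
  · subst h
    simp [Matrix.charmatrix_apply_eq, Matrix.map_apply, Matrix.one_apply, map_sub]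
  · simp [Matrix.charmatrix_apply_ne _ _ _ h, Matrix.map_apply, Matrix.one_apply, h]

set_option synthInstance.maxHeartbeats 1000000 in
set_option maxHeartbeats 1600000 in
theorem stmt_1 {V : Type*} [Fintype V] [DecidableEq V] (G : SimpleGraph V)
    [Fintype G.edgeSet] :
    (X + C 2) ^ Fintype.card V * (adjMat G.lineGraph).charpoly =
      (X + C 2) ^ Fintype.card G.edgeSet *
        ((Matrix.diagonal (fun v => (deg G v : ℝ)) + adjMat G).charpoly.comp (X + C 2)) := by
  classical
  have hinj : Function.Injective (algebraMap ℝ[X] (RatFunc ℝ)) :=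
    IsFractionRing.injective ℝ[X] (RatFunc ℝ)
  apply hinj
  set φ : ℝ[X] →+* RatFunc ℝ := (algebraMap ℝ[X] (RatFunc ℝ)) with hphi
  set f : ℝ →+* RatFunc ℝ := φ.comp (C : ℝ →+* ℝ[X]) with hf
  set t : RatFunc ℝ := φ (X + C 2) with htdef
  have ht : t ≠ 0 := by
    intro h
    exact Polynomial.X_add_C_ne_zero (2 : ℝ) (hinj (h.trans (map_zero φ).symm))
  set Bf := (incMat G).map ⇑f with hBf
  set Q := Matrix.diagonal (fun v => (deg G v : ℝ)) + adjMat G with hQ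
  show φ _ = φ _
  rw [_root_.map_mul, _root_.map_mul, map_pow, map_pow, charpoly_hom _ φ]
  rw [show (Q.charpoly.comp (X + C 2))
      = (Polynomial.eval₂RingHom (C : ℝ →+* ℝ[X]) (X + C 2)) Q.charpoly from rfl]
  rw [← RingHom.comp_apply,
    charpoly_hom _ (φ.comp (Polynomial.eval₂RingHom (C : ℝ →+* ℝ[X]) (X + C 2)))]
  have hψX : (φ.comp (Polynomial.eval₂RingHom (C : ℝ →+* ℝ[X]) (X + C 2))) X = t := by
    rw [RingHom.comp_apply, htdef]
    congr 1
    simp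
  have hψC : (φ.comp (Polynomial.eval₂RingHom (C : ℝ →+* ℝ[X]) (X + C 2))).comp
      (C : ℝ →+* ℝ[X]) = f := by
    refine RingHom.ext fun r => ?_
    simp only [RingHom.comp_apply, Polynomial.coe_eval₂RingHom, Polynomial.eval₂_C]
    rfl
  rw [hψX, hψC]
  have hmapQ : Q.map ⇑f = Bf * Bfᵀ := by
    rw [hQ, ← incMat_mul_transpose G, Matrix.map_mul, Matrix.transpose_map, hBf]
  have hmapL : φ X • (1 : Matrix G.edgeSet G.edgeSet (RatFunc ℝ))
      - (adjMat G.lineGraph).map ⇑((φ.comp (C : ℝ →+* ℝ[X])))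
      = t • 1 - Bfᵀ * Bf := by
    have h1 : Bfᵀ * Bf = (adjMat G.lineGraph).map ⇑f
        + ((2 : ℝ) • (1 : Matrix G.edgeSet G.edgeSet ℝ)).map ⇑f := by
      rw [hBf, ← Matrix.transpose_map, ← Matrix.map_mul, transpose_mul_incMat,
        Matrix.map_add _ (fun a b => map_add f a b)]
    have h2 : ((2 : ℝ) • (1 : Matrix G.edgeSet G.edgeSet ℝ)).map ⇑f
        = (f 2) • (1 : Matrix G.edgeSet G.edgeSet (RatFunc ℝ)) := by
      ext i j
      by_cases h : i = j <;> simp [Matrix.map_apply, Matrix.one_apply, h]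
    have h3 : t = φ X + f 2 := by
      rw [htdef, _root_.map_add]
      rfl
    rw [h1, h2, h3, add_smul, ← hf]
    abel
  rw [hmapL, hmapQ]
  exact key_field Bf t ht

end NLS
end

section
/- Let G1 be an r1-regular graph with n1 vertices and m1 edges (r1 ≥ 1), G2 an r2-regular graph with n2 vertices, and G3 an r3-regular graph with n3 vertices, and let 𝒢 = G1^S ⋈ (G2^V ∪ G3^E). Identify the vertex set of 𝒢 with V(G1) ⊔ I(G1) ⊔ (V(G1)×V(G2)) ⊔ (I(G1)×V(G3)). Then the normalized Laplacian of 𝒢 is the block matrix 𝓛(𝒢) = [[I_{n1}, −a·R(G1), O, O], [−a·R(G1)ᵀ, I_{m1}, −R(G1)ᵀ ⊗ bᵀ, −I_{m1} ⊗ cᵀ], [O, −R(G1) ⊗ b, I_{n1} ⊗ (I_{n2} − A(G2)/(r1+r2)), O], [O, −I_{m1} ⊗ c, O, I_{m1} ⊗ (I_{n3} − A(G3)/(r3+1))]], where R(G1) is the incidence matrix of G1, a = 1/√(r1(2n2+n3+2)), b = (1/√((r1+r2)(2n2+n3+2)))·𝟏_{n2}, c = (1/√((r3+1)(2n2+n3+2)))·𝟏_{n3},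 ⊗ is the Kronecker product, and 𝟏_k is the all-ones column vector of size k. -/
open Matrix Polynomial BigOperators Kronecker

namespace NLS

variable {V : Type*}

section Helpers

lemma adjMat_of_adj {G : SimpleGraph V} {x y : V} (h : G.Adj x y) : adjMat G x y = 1 := by
  letI := Classical.decRel G.Adj
  show (if G.Adj x y then (1:ℝ) else 0) = 1
  exact if_pos h

lemma adjMat_of_not_adj {G : SimpleGraph V} {x y : V} (h : ¬ G.Adj x y) : adjMat G x y = 0 := by
  letI := Classical.decRel G.Adj
  show (if G.Adj x y then (1:ℝ) else 0) = 0
  exact if_neg h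

lemma deg_eq_card [Fintype V] (G : SimpleGraph V) (v : V) [Fintype {w // G.Adj v w}] :
    deg G v = Fintype.card {w // G.Adj v w} := by
  classical
  rw [deg, ← SimpleGraph.card_neighborSet_eq_degree]
  exact Fintype.card_congr (Equiv.subtypeEquivRight fun _ => Iff.rfl)

lemma card_mem_sym2 [Fintype V] [DecidableEq V] {a b : V} (hab : a ≠ b) :
    Fintype.card {v : V // v ∈ s(a, b)} = 2 := by
  rw [Fintype.card_subtype]
  have h : Finset.univ.filter (fun v : V => v ∈ s(a, b)) = {a, b} := by
    ext v; simp [Sym2.mem_iff]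
  rw [h, Finset.card_pair hab]

lemma card_mem_edge [Fintype V] [DecidableEq V] (G : SimpleGraph V) (e : G.edgeSet) :
    Fintype.card {v : V // v ∈ (e : Sym2 V)} = 2 := by
  obtain ⟨e, he⟩ := e
  induction e with
  | _ a b =>
    rw [SimpleGraph.mem_edgeSet] at he
    exact card_mem_sym2 he.ne

lemma card_incident [Fintype V] [DecidableEq V] (G : SimpleGraph V) [Fintype G.edgeSet]
    (v : V) : Fintype.card {e : G.edgeSet // v ∈ (e : Sym2 V)} = deg G v := by
  classical
  rw [deg, ← SimpleGraph.card_incidenceSet_eq_degree]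
  refine Fintype.card_congr ⟨fun e => ⟨e.1.1, e.1.2, e.2⟩, fun e => ⟨⟨e.1, e.2.1⟩, e.2.2⟩,
    fun e => rfl, fun e => rfl⟩


end Helpers

section DegTest
variable {V1 V2 V3 : Type*} [Fintype V1] [DecidableEq V1] [Fintype V2] [DecidableEq V2]
  [Fintype V3] [DecidableEq V3]
  (G1 : SimpleGraph V1) (G2 : SimpleGraph V2) (G3 : SimpleGraph V3) [Fintype G1.edgeSet]

lemma svev_deg_inl (v : V1) : deg (svev G1 G2 G3) (Sum.inl v) = deg G1 v := by
  classical
  rw [deg_eq_card, ← card_incident G1 v]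
  refine Fintype.card_congr ⟨fun x => ?_, fun e => ⟨Sum.inr (Sum.inl e.1), e.2⟩, ?_, ?_⟩
  · obtain ⟨y, h⟩ := x
    rcases y with v' | e | p | q
    · exact False.elim h
    · exact ⟨e, h⟩
    · exact False.elim h
    · exact False.elim h
  · rintro ⟨(v' | e | p | q), h⟩
    · exact False.elim h
    · rfl
    · exact False.elim h
    · exact False.elim h
  · rintro ⟨e, h⟩; rfl

lemma svev_deg_ins (e : G1.edgeSet) :
    deg (svev G1 G2 G3) (Sum.inr (Sum.inl e)) =
      2 * Fintype.card V2 + Fintype.card V3 + 2 := by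
  classical
  rw [deg_eq_card]
  have key : {w // (svev G1 G2 G3).Adj (Sum.inr (Sum.inl e)) w} ≃
      ({v : V1 // v ∈ (e : Sym2 V1)} ⊕ (({v : V1 // v ∈ (e : Sym2 V1)} × V2) ⊕ V3)) := by
    refine ⟨fun x => ?_, fun z => ?_, ?_, ?_⟩
    · obtain ⟨y, h⟩ := x
      rcases y with v | e' | p | q
      · exact Sum.inl ⟨v, h⟩
      · exact False.elim h
      · exact Sum.inr (Sum.inl (⟨p.1, h⟩, p.2))
      · exact Sum.inr (Sum.inr q.2)
    · rcases z with ⟨v, hv⟩ | ⟨⟨⟨i, hi⟩, u⟩ | w⟩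
      · exact ⟨Sum.inl v, hv⟩
      · exact ⟨Sum.inr (Sum.inr (Sum.inl (i, u))), hi⟩
      · exact ⟨Sum.inr (Sum.inr (Sum.inr (e, w))), rfl⟩
    · rintro ⟨(v | e' | ⟨i, u⟩ | ⟨e', w⟩), h⟩
      · rfl
      · exact False.elim h
      · rfl
      · have h' : e' = e := h
        subst h'
        rfl
    · rintro (⟨v, hv⟩ | ⟨⟨i, hi⟩, u⟩ | w) <;> rfl
  rw [Fintype.card_congr key]
  simp only [Fintype.card_sum, Fintype.card_prod, card_mem_edge G1 e]
  ring

lemma svev_deg_pv (i : V1) (u : V2) :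
    deg (svev G1 G2 G3) (Sum.inr (Sum.inr (Sum.inl (i, u)))) = deg G1 i + deg G2 u := by
  classical
  rw [deg_eq_card]
  have key : {w // (svev G1 G2 G3).Adj (Sum.inr (Sum.inr (Sum.inl (i, u)))) w} ≃
      ({e : G1.edgeSet // i ∈ (e : Sym2 V1)} ⊕ {u' : V2 // G2.Adj u u'}) := by
    refine ⟨fun x => ?_, fun z => ?_, ?_, ?_⟩
    · obtain ⟨y, h⟩ := x
      rcases y with v | e' | p | q
      · exact False.elim h
      · exact Sum.inl ⟨e', h⟩
      · exact Sum.inr ⟨p.2, h.2⟩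
      · exact False.elim h
    · rcases z with ⟨e', he⟩ | ⟨u', hu⟩
      · exact ⟨Sum.inr (Sum.inl e'), he⟩
      · exact ⟨Sum.inr (Sum.inr (Sum.inl (i, u'))), ⟨rfl, hu⟩⟩
    · rintro ⟨(v | e' | ⟨i', u'⟩ | q), h⟩
      · exact False.elim h
      · rfl
      · obtain ⟨h1, h2⟩ := h
        have h1' : i = i' := h1
        subst h1'
        rfl
      · exact False.elim h
    · rintro (⟨e', he⟩ | ⟨u', hu⟩) <;> rfl
  rw [Fintype.card_congr key, Fintype.card_sum, card_incident G1 i, ← deg_eq_card]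

lemma svev_deg_qv (e : G1.edgeSet) (w : V3) :
    deg (svev G1 G2 G3) (Sum.inr (Sum.inr (Sum.inr (e, w)))) = deg G3 w + 1 := by
  classical
  rw [deg_eq_card]
  have key : {w' // (svev G1 G2 G3).Adj (Sum.inr (Sum.inr (Sum.inr (e, w)))) w'} ≃
      ({w' : V3 // G3.Adj w w'} ⊕ Unit) := by
    refine ⟨fun x => ?_, fun z => ?_, ?_, ?_⟩
    · obtain ⟨y, h⟩ := x
      rcases y with v | e' | p | q
      · exact False.elim h
      · exact Sum.inr ()
      · exact False.elim h
      · exact Sum.inl ⟨q.2, h.2⟩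
    · rcases z with ⟨w', hw⟩ | _
      · exact ⟨Sum.inr (Sum.inr (Sum.inr (e, w'))), ⟨rfl, hw⟩⟩
      · exact ⟨Sum.inr (Sum.inl e), rfl⟩
    · rintro ⟨(v | e' | p | ⟨e', w'⟩), h⟩
      · exact False.elim h
      · have h' : e = e' := h
        subst h'
        rfl
      · exact False.elim h
      · obtain ⟨h1, h2⟩ := h
        have h1' : e = e' := h1
        subst h1'
        rfl
    · rintro (⟨w', hw⟩ | _) <;> rfl
  rw [Fintype.card_congr key, Fintype.card_sum, ← deg_eq_card]
  rfl

end DegTest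


lemma normLap_apply {V : Type*} [Fintype V] [DecidableEq V] (G : SimpleGraph V) (x y : V) :
    normLap G x y = (if x = y then 1 else 0)
      - (Real.sqrt (deg G x))⁻¹ * adjMat G x y * (Real.sqrt (deg G y))⁻¹ := by
  letI := Classical.decEq V
  show (1 - (Matrix.diagonal fun v => (Real.sqrt (deg G v))⁻¹) * adjMat G *
      (Matrix.diagonal fun v => (Real.sqrt (deg G v))⁻¹)) x y = _
  rw [Matrix.sub_apply, Matrix.mul_diagonal, Matrix.diagonal_mul, Matrix.one_apply]
  by_cases h : x = y <;> simp [h]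

theorem stmt_4 {V1 V2 V3 : Type*} [Fintype V1] [DecidableEq V1]
    [Fintype V2] [DecidableEq V2] [Fintype V3] [DecidableEq V3]
    (G1 : SimpleGraph V1) (G2 : SimpleGraph V2) (G3 : SimpleGraph V3)
    [Fintype G1.edgeSet]
    (r1 r2 r3 : ℕ) (hr1 : 1 ≤ r1)
    (h1 : IsReg G1 r1) (h2 : IsReg G2 r2) (h3 : IsReg G3 r3)
    (a b c : ℝ)
    (ha : a = (Real.sqrt ((r1 : ℝ) * (2 * Fintype.card V2 + Fintype.card V3 + 2)))⁻¹)
    (hb : b = (Real.sqrt (((r1 : ℝ) + r2) * (2 * Fintype.card V2 + Fintype.card V3 + 2)))⁻¹)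
    (hc : c = (Real.sqrt (((r3 : ℝ) + 1) * (2 * Fintype.card V2 + Fintype.card V3 + 2)))⁻¹) :
    normLap (svev G1 G2 G3) =
      Matrix.fromBlocks (1 : Matrix V1 V1 ℝ)
        (Matrix.fromCols (-a • incMat G1)
          (0 : Matrix V1 ((V1 × V2) ⊕ (G1.edgeSet × V3)) ℝ))
        (Matrix.fromRows (-a • (incMat G1)ᵀ)
          (0 : Matrix ((V1 × V2) ⊕ (G1.edgeSet × V3)) V1 ℝ))
        (Matrix.fromBlocks (1 : Matrix G1.edgeSet G1.edgeSet ℝ)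
          (Matrix.fromCols
            (Matrix.of fun (e : G1.edgeSet) (p : V1 × V2) => -(incMat G1 p.1 e * b))
            (Matrix.of fun (e : G1.edgeSet) (q : G1.edgeSet × V3) =>
              -(if q.1 = e then c else 0)))
          (Matrix.fromRows
            (Matrix.of fun (p : V1 × V2) (e : G1.edgeSet) => -(incMat G1 p.1 e * b))
            (Matrix.of fun (q : G1.edgeSet × V3) (e : G1.edgeSet) =>
              -(if q.1 = e then c else 0)))
          (Matrix.fromBlocks
            ((1 : Matrix V1 V1 ℝ) ⊗ₖ
              ((1 : Matrix V2 V2 ℝ) - ((r1 : ℝ) + r2)⁻¹ • adjMat G2))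
            0 0
            ((1 : Matrix G1.edgeSet G1.edgeSet ℝ) ⊗ₖ
              ((1 : Matrix V3 V3 ℝ) - ((r3 : ℝ) + 1)⁻¹ • adjMat G3)))) := by
  classical
  have hr1' : (0:ℝ) < r1 := by exact_mod_cast hr1
  have hsp : (0:ℝ) < 2 * (Fintype.card V2 : ℝ) + Fintype.card V3 + 2 := by positivity
  have ha' : (Real.sqrt r1)⁻¹ *
      (Real.sqrt (2 * (Fintype.card V2 : ℝ) + Fintype.card V3 + 2))⁻¹ = a := by
    rw [ha, Real.sqrt_mul (by positivity), mul_inv]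
  have hb' : (Real.sqrt ((r1:ℝ) + r2))⁻¹ *
      (Real.sqrt (2 * (Fintype.card V2 : ℝ) + Fintype.card V3 + 2))⁻¹ = b := by
    rw [hb, Real.sqrt_mul (by positivity), mul_inv]
  have hc' : (Real.sqrt ((r3:ℝ) + 1))⁻¹ *
      (Real.sqrt (2 * (Fintype.card V2 : ℝ) + Fintype.card V3 + 2))⁻¹ = c := by
    rw [hc, Real.sqrt_mul (by positivity), mul_inv]
  have hbb : (Real.sqrt ((r1:ℝ) + r2))⁻¹ * (Real.sqrt ((r1:ℝ) + r2))⁻¹ = ((r1:ℝ) + r2)⁻¹ := by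
    rw [← mul_inv, Real.mul_self_sqrt (by positivity)]
  have hcc : (Real.sqrt ((r3:ℝ) + 1))⁻¹ * (Real.sqrt ((r3:ℝ) + 1))⁻¹ = ((r3:ℝ) + 1)⁻¹ := by
    rw [← mul_inv, Real.mul_self_sqrt (by positivity)]
  have d1 : ∀ v : V1, Real.sqrt (deg (svev G1 G2 G3) (Sum.inl v) : ℝ) = Real.sqrt r1 := by
    intro v; rw [svev_deg_inl G1 G2 G3 v, h1 v]
  have d2 : ∀ e : G1.edgeSet, Real.sqrt (deg (svev G1 G2 G3) (Sum.inr (Sum.inl e)) : ℝ) =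
      Real.sqrt (2 * (Fintype.card V2 : ℝ) + Fintype.card V3 + 2) := by
    intro e; rw [svev_deg_ins G1 G2 G3 e]; congr 1; push_cast; ring
  have d3 : ∀ (i : V1) (u : V2),
      Real.sqrt (deg (svev G1 G2 G3) (Sum.inr (Sum.inr (Sum.inl (i, u)))) : ℝ) =
      Real.sqrt ((r1:ℝ) + r2) := by
    intro i u; rw [svev_deg_pv G1 G2 G3 i u, h1 i, h2 u]; congr 1; push_cast; ring
  have d4 : ∀ (e : G1.edgeSet) (w : V3),
      Real.sqrt (deg (svev G1 G2 G3) (Sum.inr (Sum.inr (Sum.inr (e, w)))) : ℝ) =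
      Real.sqrt ((r3:ℝ) + 1) := by
    intro e w; rw [svev_deg_qv G1 G2 G3 e w, h3 w]; congr 1; push_cast; ring
  -- adjacency matrix entries
  have AVE : ∀ (v : V1) (e : G1.edgeSet),
      adjMat (svev G1 G2 G3) (Sum.inl v) (Sum.inr (Sum.inl e)) =
        if v ∈ (e : Sym2 V1) then 1 else 0 := by
    intro v e
    by_cases h : v ∈ (e : Sym2 V1)
    · rw [if_pos h]; exact adjMat_of_adj h
    · rw [if_neg h]; exact adjMat_of_not_adj h
  have AEV : ∀ (e : G1.edgeSet) (v : V1),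
      adjMat (svev G1 G2 G3) (Sum.inr (Sum.inl e)) (Sum.inl v) =
        if v ∈ (e : Sym2 V1) then 1 else 0 := by
    intro e v
    by_cases h : v ∈ (e : Sym2 V1)
    · rw [if_pos h]; exact adjMat_of_adj h
    · rw [if_neg h]; exact adjMat_of_not_adj h
  have AEP : ∀ (e : G1.edgeSet) (i : V1) (u : V2),
      adjMat (svev G1 G2 G3) (Sum.inr (Sum.inl e)) (Sum.inr (Sum.inr (Sum.inl (i, u)))) =
        if i ∈ (e : Sym2 V1) then 1 else 0 := by
    intro e i u
    by_cases h : i ∈ (e : Sym2 V1)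
    · rw [if_pos h]; exact adjMat_of_adj h
    · rw [if_neg h]; exact adjMat_of_not_adj h
  have APE : ∀ (i : V1) (u : V2) (e : G1.edgeSet),
      adjMat (svev G1 G2 G3) (Sum.inr (Sum.inr (Sum.inl (i, u)))) (Sum.inr (Sum.inl e)) =
        if i ∈ (e : Sym2 V1) then 1 else 0 := by
    intro i u e
    by_cases h : i ∈ (e : Sym2 V1)
    · rw [if_pos h]; exact adjMat_of_adj h
    · rw [if_neg h]; exact adjMat_of_not_adj h
  have AEQ : ∀ (e e' : G1.edgeSet) (w : V3),
      adjMat (svev G1 G2 G3) (Sum.inr (Sum.inl e)) (Sum.inr (Sum.inr (Sum.inr (e', w)))) =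
        if e' = e then 1 else 0 := by
    intro e e' w
    by_cases h : e' = e
    · rw [if_pos h]; exact adjMat_of_adj h
    · rw [if_neg h]; exact adjMat_of_not_adj h
  have AQE : ∀ (e' : G1.edgeSet) (w : V3) (e : G1.edgeSet),
      adjMat (svev G1 G2 G3) (Sum.inr (Sum.inr (Sum.inr (e', w)))) (Sum.inr (Sum.inl e)) =
        if e' = e then 1 else 0 := by
    intro e' w e
    by_cases h : e' = e
    · rw [if_pos h]; exact adjMat_of_adj h
    · rw [if_neg h]; exact adjMat_of_not_adj h
  have APP : ∀ (i : V1) (u : V2) (i' : V1) (u' : V2),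
      adjMat (svev G1 G2 G3) (Sum.inr (Sum.inr (Sum.inl (i, u))))
        (Sum.inr (Sum.inr (Sum.inl (i', u')))) =
        if i = i' ∧ G2.Adj u u' then 1 else 0 := by
    intro i u i' u'
    by_cases h : i = i' ∧ G2.Adj u u'
    · rw [if_pos h]; exact adjMat_of_adj h
    · rw [if_neg h]; exact adjMat_of_not_adj h
  have AQQ : ∀ (e : G1.edgeSet) (w : V3) (e' : G1.edgeSet) (w' : V3),
      adjMat (svev G1 G2 G3) (Sum.inr (Sum.inr (Sum.inr (e, w))))
        (Sum.inr (Sum.inr (Sum.inr (e', w')))) =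
        if e = e' ∧ G3.Adj w w' then 1 else 0 := by
    intro e w e' w'
    by_cases h : e = e' ∧ G3.Adj w w'
    · rw [if_pos h]; exact adjMat_of_adj h
    · rw [if_neg h]; exact adjMat_of_not_adj h
  ext x y
  rw [normLap_apply]
  rcases x with v | e | ⟨i, u⟩ | ⟨e, w⟩ <;> rcases y with v' | e' | ⟨i', u'⟩ | ⟨e', w'⟩
  -- VV
  · rw [adjMat_of_not_adj (G := svev G1 G2 G3) (x := Sum.inl v) (y := Sum.inl v') (fun h => h)]
    simp [Matrix.one_apply]
  -- VE
  · rw [d1 v, d2 e', AVE v e']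
    by_cases hv : v ∈ (e' : Sym2 V1)
    · simp only [if_pos hv, Matrix.fromBlocks_apply₁₂, Matrix.fromCols_apply_inl,
        Matrix.smul_apply, smul_eq_mul, incMat, Matrix.of_apply, reduceCtorEq, if_false]
      rw [← ha']; ring
    · simp [hv, incMat]
  -- VP
  · rw [adjMat_of_not_adj (G := svev G1 G2 G3) (x := Sum.inl v) (y := Sum.inr (Sum.inr (Sum.inl (i', u')))) (fun h => h)]
    simp
  -- VQ
  · rw [adjMat_of_not_adj (G := svev G1 G2 G3) (x := Sum.inl v) (y := Sum.inr (Sum.inr (Sum.inr (e', w')))) (fun h => h)]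
    simp
  -- EV
  · rw [d1 v', d2 e, AEV e v']
    by_cases hv : v' ∈ (e : Sym2 V1)
    · simp only [if_pos hv, Matrix.fromBlocks_apply₂₁, Matrix.fromRows_apply_inl,
        Matrix.smul_apply, smul_eq_mul, Matrix.transpose_apply, incMat, Matrix.of_apply,
        reduceCtorEq, if_false]
      rw [← ha']; ring
    · simp [hv, incMat]
  -- EE
  · rw [adjMat_of_not_adj (G := svev G1 G2 G3) (x := Sum.inr (Sum.inl e)) (y := Sum.inr (Sum.inl e')) (fun h => h)]
    simp [Matrix.one_apply]
  -- EP
  · rw [d2 e, d3 i' u', AEP e i' u']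
    by_cases hv : i' ∈ (e : Sym2 V1)
    · simp only [if_pos hv, Matrix.fromBlocks_apply₂₂, Matrix.fromBlocks_apply₁₂,
        Matrix.fromCols_apply_inl, Matrix.of_apply, incMat, Sum.inr.injEq, reduceCtorEq, if_false]
      rw [← hb']; ring
    · simp [hv, incMat]
  -- EQ
  · rw [d2 e, d4 e' w', AEQ e e' w']
    by_cases hv : e' = e
    · simp only [if_pos hv, Matrix.fromBlocks_apply₂₂, Matrix.fromBlocks_apply₁₂,
        Matrix.fromCols_apply_inr, Matrix.of_apply, Sum.inr.injEq, reduceCtorEq, if_false]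
      rw [← hc']; ring
    · simp [hv]
  -- PV
  · rw [adjMat_of_not_adj (G := svev G1 G2 G3) (x := Sum.inr (Sum.inr (Sum.inl (i, u)))) (y := Sum.inl v') (fun h => h)]
    simp
  -- PE
  · rw [d2 e', d3 i u, APE i u e']
    by_cases hv : i ∈ (e' : Sym2 V1)
    · simp only [if_pos hv, Matrix.fromBlocks_apply₂₂, Matrix.fromBlocks_apply₂₁,
        Matrix.fromRows_apply_inl, Matrix.of_apply, incMat, Sum.inr.injEq, reduceCtorEq, if_false]
      rw [← hb']; ring
    · simp [hv, incMat]
  -- PP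
  · rw [d3 i u, d3 i' u', APP i u i' u']
    simp only [Matrix.fromBlocks_apply₂₂, Matrix.fromBlocks_apply₁₁,
      Matrix.kroneckerMap_apply, Matrix.one_apply, Matrix.sub_apply,
      Matrix.smul_apply, smul_eq_mul]
    by_cases hii : i = i'
    · subst hii
      by_cases huu : G2.Adj u u'
      · have hne : u ≠ u' := huu.ne
        rw [adjMat_of_adj huu]
        simp only [if_pos huu, huu, and_self, if_true, Sum.inr.injEq, Sum.inl.injEq,
          Prod.mk.injEq, true_and, hne, if_false, and_true, if_neg hne]
        rw [← hbb]; ring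
      · rw [adjMat_of_not_adj huu]
        simp [huu, Sum.inr.injEq, Sum.inl.injEq, Prod.mk.injEq, Matrix.one_apply]
    · simp [hii, Sum.inr.injEq, Sum.inl.injEq, Prod.mk.injEq]
  -- PQ
  · rw [adjMat_of_not_adj (G := svev G1 G2 G3) (x := Sum.inr (Sum.inr (Sum.inl (i, u)))) (y := Sum.inr (Sum.inr (Sum.inr (e', w')))) (fun h => h)]
    simp
  -- QV
  · rw [adjMat_of_not_adj (G := svev G1 G2 G3) (x := Sum.inr (Sum.inr (Sum.inr (e, w)))) (y := Sum.inl v') (fun h => h)]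
    simp
  -- QE
  · rw [d2 e', d4 e w, AQE e w e']
    by_cases hv : e = e'
    · simp only [if_pos hv, Matrix.fromBlocks_apply₂₂, Matrix.fromBlocks_apply₂₁,
        Matrix.fromRows_apply_inr, Matrix.of_apply, Sum.inr.injEq, reduceCtorEq, if_false]
      rw [← hc']; ring
    · simp [hv]
  -- QP
  · rw [adjMat_of_not_adj (G := svev G1 G2 G3) (x := Sum.inr (Sum.inr (Sum.inr (e, w)))) (y := Sum.inr (Sum.inr (Sum.inl (i', u')))) (fun h => h)]
    simp
  -- QQ
  · rw [d4 e w, d4 e' w', AQQ e w e' w']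
    simp only [Matrix.fromBlocks_apply₂₂, Matrix.kroneckerMap_apply,
      Matrix.one_apply, Matrix.sub_apply, Matrix.smul_apply, smul_eq_mul]
    by_cases hee : e = e'
    · subst hee
      by_cases hww : G3.Adj w w'
      · have hne : w ≠ w' := hww.ne
        rw [adjMat_of_adj hww]
        simp only [if_pos hww, hww, and_self, if_true, Sum.inr.injEq,
          Prod.mk.injEq, true_and, hne, if_false, and_true, if_neg hne]
        rw [← hcc]; ring
      · rw [adjMat_of_not_adj hww]
        simp [hww, Sum.inr.injEq, Prod.mk.injEq, Matrix.one_apply]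
    · simp [hee, Sum.inr.injEq, Prod.mk.injEq]


end NLS
end
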